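/- Let G = (V,E) be a finite simple graph and u ∈ V such that the set N̄[u] of vertices at complement-distance 0 or 1 from u (i.e., u together with all vertices non-adjacent to u) forms an independent set in G. Then χ(G) = χ(G[N(u)]) + 1. -/
import Mathlib

theorem stmt_7 {V : Type*} [Fintype V] (G : SimpleGraph V) (u : V)
    (h : (insert u {v : V | v ≠ u ∧ ¬ G.Adj u v}).Pairwise fun a b => ¬ G.Adj a b) :
    G.chromaticNumber = (G.induce (G.neighborSet u)).chromaticNumber + 1 := by
  classical
  have hmem : ∀ v : V, ¬ G.Adj u v → v ∈ (insert u {v : V | v ≠ u ∧ ¬ G.Adj u v}) := by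
    intro v hv
    by_cases hvu : v = u
    · simp [hvu]
    · exact Set.mem_insert_iff.mpr (Or.inr ⟨hvu, hv⟩)
  set m := ((G.induce (G.neighborSet u)).chromaticNumber).toNat with hm
  have hCm : (G.induce (G.neighborSet u)).Colorable m :=
    (G.induce (G.neighborSet u)).colorable_chromaticNumber_of_fintype
  set n := (G.chromaticNumber).toNat with hn
  have hCn : G.Colorable n := G.colorable_chromaticNumber_of_fintype
  have hntop : G.chromaticNumber ≠ ⊤ :=
    (SimpleGraph.chromaticNumber_ne_top_iff_exists).mpr ⟨n, hCn⟩
  have hmtop : (G.induce (G.neighborSet u)).chromaticNumber ≠ ⊤ :=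
    (SimpleGraph.chromaticNumber_ne_top_iff_exists).mpr ⟨m, hCm⟩
  -- G is colorable with m+1 colors
  have h1 : G.Colorable (m + 1) := by
    obtain ⟨C⟩ := hCm
    refine ⟨SimpleGraph.Coloring.mk
      (fun v => if hv : G.Adj u v then (C ⟨v, hv⟩).castSucc else Fin.last m) ?_⟩
    intro a b hab
    by_cases ha : G.Adj u a <;> by_cases hb : G.Adj u b <;> simp only [ha, hb, dif_pos, dif_neg,
      not_false_iff, dite_true, dite_false]
    · intro hcc
      have := Fin.castSucc_injective _ hcc
      exact C.valid (by exact hab) this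
    · exact fun hc => (Fin.castSucc_lt_last _).ne hc
    · exact fun hc => (Fin.castSucc_lt_last _).ne hc.symm
    · intro _
      exact h (hmem a ha) (hmem b hb) (G.ne_of_adj hab) hab
  -- induce is colorable with n-1 colors
  have hn1 : 1 ≤ n := by
    rcases hCn with ⟨D⟩
    rcases Nat.eq_zero_or_pos n with h0 | h1
    · exfalso; exact Fin.elim0 (h0 ▸ D u)
    · exact h1
  have h2 : (G.induce (G.neighborSet u)).Colorable (n - 1) := by
    obtain ⟨D⟩ := hCn
    have card : Fintype.card {x : Fin n // x ≠ D u} = n - 1 := by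
      rw [Fintype.card_subtype_compl]
      simp
    have C' : (G.induce (G.neighborSet u)).Coloring {x : Fin n // x ≠ D u} :=
      SimpleGraph.Coloring.mk
        (fun v => ⟨D v.1, fun hc => D.valid v.2 hc.symm⟩)
        (fun {a b} hab hc => D.valid hab (congrArg Subtype.val hc))
    exact card ▸ C'.colorable
  have le1 : n ≤ m + 1 := by
    have := h1.chromaticNumber_le
    rw [← ENat.coe_toNat hntop, Nat.cast_le] at this
    exact this
  have le2 : m + 1 ≤ n := by
    have := h2.chromaticNumber_le
    rw [← ENat.coe_toNat hmtop, Nat.cast_le] at this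
    omega
  have : n = m + 1 := le_antisymm le1 le2
  rw [← ENat.coe_toNat hntop, ← ENat.coe_toNat hmtop, ← hn, ← hm, this]
  push_cast
  ring
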